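/- Let all parameters be positive reals with ε ∈ (0,1) and L = log₂(1/ε), let C be the total cost with linear computational cost, and let γ₁ > 0 be the unique positive zero of C′. If γ₁ > m₀, then C is strictly decreasing on [1, m₀], and hence the minimum of C over [1, m₀] is attained at γ = m₀ and nowhere else. -/

import Mathlib

open Real Set Filter

theorem stmt19 (m₀ n₀ d κ ω θ τ β ε L : ℝ)
    (hm : 1 < m₀) (hn : 0 < n₀) (hd : 0 < d) (hκ : 0 < κ) (hω : 0 < ω) (hθ : 0 < θ)
    (hτ : 0 < τ) (hβ : 0 < β)
    (hε : 0 < ε) (hε1 : ε < 1) (hL : L = Real.logb 2 (1/ε))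
    (C : ℝ → ℝ)
    (hC : C = fun γ => 2*ω*θ*(m₀/γ - 1)*((1 + κ/(n₀*γ))*L) + θ*(m₀ - m₀/γ)*n₀*d
      + β*γ*τ*n₀*(m₀ + γ)*((1 + κ/(n₀*γ))*L))
    (γ₁ : ℝ) (hγ₁ : 0 < γ₁) (hcrit : deriv C γ₁ = 0)
    (huniq : ∀ γ : ℝ, 0 < γ → deriv C γ = 0 → γ = γ₁) (hgt : m₀ < γ₁) :
    StrictAntiOn C (Set.Icc 1 m₀) ∧
    ∀ γ ∈ Set.Ico (1:ℝ) m₀, C m₀ < C γ := by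
  have hm0 : 0 < m₀ := lt_trans one_pos hm
  have hL0 : 0 < L := by
    rw [hL]
    exact Real.logb_pos one_lt_two (by rw [lt_div_iff₀ hε]; linarith)
  set a₀ : ℝ := -(2*ω*θ*L) + θ*n₀*d*m₀ + β*τ*L*κ*m₀ with ha₀
  set a₁ : ℝ := β*τ*L*(n₀*m₀ + κ) with ha₁
  set a₂ : ℝ := β*τ*L*n₀ with ha₂
  set b₁ : ℝ := 2*ω*θ*L*m₀ - 2*ω*θ*L*(κ/n₀) - θ*n₀*d*m₀ with hb₁
  set b₂ : ℝ := 2*ω*θ*L*m₀*(κ/n₀) with hb₂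
  have ha₁0 : 0 < a₁ := by positivity
  have ha₂0 : 0 < a₂ := by positivity
  have hb₂0 : 0 < b₂ := by positivity
  -- polynomial form of C away from 0
  have hCg : ∀ x : ℝ, x ≠ 0 → C x = a₀ + a₁*x + a₂*x^2 + b₁*x⁻¹ + b₂*(x⁻¹)^2 := by
    intro x hx
    rw [hC, ha₀, ha₁, ha₂, hb₁, hb₂]
    field_simp
    ring
  have hg : ∀ x : ℝ, x ≠ 0 → HasDerivAt (fun y : ℝ => a₀ + a₁*y + a₂*y^2 + b₁*y⁻¹ + b₂*(y⁻¹)^2)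
      (a₁ + 2*a₂*x - b₁/x^2 - 2*b₂/x^3) x := by
    intro x hx
    have h1 : HasDerivAt (fun y : ℝ => a₁ * y) (a₁ * 1) x := (hasDerivAt_id x).const_mul a₁
    have h2 : HasDerivAt (fun y : ℝ => a₂ * y^2) (a₂ * (2 * x ^ 1)) x :=
      (hasDerivAt_pow 2 x).const_mul a₂
    have hinv := hasDerivAt_inv hx
    have h3 : HasDerivAt (fun y : ℝ => b₁ * y⁻¹) (b₁ * (-(x^2)⁻¹)) x := hinv.const_mul b₁
    have h4 : HasDerivAt (fun y : ℝ => b₂ * (y⁻¹)^2)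
        (b₂ * ((2 : ℕ) * (x⁻¹) ^ 1 * (-(x^2)⁻¹))) x := (hinv.pow 2).const_mul b₂
    have h := ((((hasDerivAt_const x a₀).add h1).add h2).add h3).add h4
    refine h.congr_deriv ?_
    push_cast
    ring
  have hCd : ∀ x : ℝ, x ≠ 0 → HasDerivAt C (a₁ + 2*a₂*x - b₁/x^2 - 2*b₂/x^3) x := by
    intro x hx
    refine (hg x hx).congr_of_eventuallyEq ?_
    filter_upwards [isOpen_ne.mem_nhds hx] with y hy
    exact hCg y hy
  have hderivC : ∀ x : ℝ, x ≠ 0 → deriv C x = a₁ + 2*a₂*x - b₁/x^2 - 2*b₂/x^3 :=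
    fun x hx => (hCd x hx).deriv
  -- a point with negative derivative
  set K : ℝ := a₁ + 2*a₂ + |b₁| with hK
  have hK0 : 0 < K := by
    have := abs_nonneg b₁
    simp only [hK]; linarith
  set x₀ : ℝ := min 1 (b₂/K) with hx₀def
  have hx₀pos : 0 < x₀ := lt_min one_pos (by positivity)
  have hx₀le1 : x₀ ≤ 1 := min_le_left _ _
  have hKx₀ : K * x₀ ≤ b₂ := by
    have h1 : x₀ ≤ b₂/K := min_le_right _ _
    calc K * x₀ ≤ K * (b₂/K) := mul_le_mul_of_nonneg_left h1 hK0.le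
    _ = b₂ := by field_simp
  have hDx₀ : deriv C x₀ < 0 := by
    rw [hderivC x₀ hx₀pos.ne']
    have hcube : 0 < x₀^3 := by positivity
    have heq : x₀^3 * (a₁ + 2*a₂*x₀ - b₁/x₀^2 - 2*b₂/x₀^3)
        = a₁*x₀^3 + 2*a₂*x₀^4 - b₁*x₀ - 2*b₂ := by
      field_simp
    have e1 : x₀^3 ≤ x₀ := by
      calc x₀^3 ≤ x₀^1 := pow_le_pow_of_le_one hx₀pos.le hx₀le1 (by norm_num)
      _ = x₀ := pow_one x₀
    have e2 : x₀^4 ≤ x₀ := by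
      calc x₀^4 ≤ x₀^1 := pow_le_pow_of_le_one hx₀pos.le hx₀le1 (by norm_num)
      _ = x₀ := pow_one x₀
    have e3 : (-b₁)*x₀ ≤ |b₁| * x₀ := mul_le_mul_of_nonneg_right (neg_le_abs b₁) hx₀pos.le
    have ea : a₁*x₀^3 ≤ a₁*x₀ := mul_le_mul_of_nonneg_left e1 ha₁0.le
    have eb : a₂*x₀^4 ≤ a₂*x₀ := mul_le_mul_of_nonneg_left e2 ha₂0.le
    have key : x₀^3 * (a₁ + 2*a₂*x₀ - b₁/x₀^2 - 2*b₂/x₀^3) < 0 := by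
      rw [heq]
      have hKe : K * x₀ = a₁*x₀ + 2*(a₂*x₀) + |b₁| * x₀ := by rw [hK]; ring
      linarith
    by_contra hcon
    push_neg at hcon
    have := mul_nonneg hcube.le hcon
    linarith
  -- derivative is negative on (0, γ₁)
  have hneg : ∀ x : ℝ, 0 < x → x < γ₁ → deriv C x < 0 := by
    intro x hx hxlt
    by_contra hcon
    push_neg at hcon
    have hx₀lt : x₀ < γ₁ := by linarith
    have hsub : Set.uIcc x₀ x ⊆ {y : ℝ | y ≠ 0} := by
      intro y hy
      rcases Set.mem_uIcc.mp hy with ⟨h1, _⟩ | ⟨h1, _⟩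
      · exact (lt_of_lt_of_le hx₀pos h1).ne'
      · exact (lt_of_lt_of_le hx h1).ne'
    have hDcont : ContinuousOn (fun y : ℝ => a₁ + 2*a₂*y - b₁/y^2 - 2*b₂/y^3)
        {y : ℝ | y ≠ 0} := by
      refine ContinuousOn.sub (ContinuousOn.sub (by fun_prop) ?_) ?_
      · exact continuousOn_const.div ((continuous_pow 2).continuousOn)
          (fun y hy => pow_ne_zero _ hy)
      · exact continuousOn_const.div ((continuous_pow 3).continuousOn)
          (fun y hy => pow_ne_zero _ hy)
    have hcont : ContinuousOn (deriv C) (Set.uIcc x₀ x) :=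
      (hDcont.mono hsub).congr (fun y hy => hderivC y (hsub hy))
    have h0mem : (0:ℝ) ∈ Set.uIcc (deriv C x₀) (deriv C x) :=
      Set.mem_uIcc.mpr (Or.inl ⟨hDx₀.le, hcon⟩)
    obtain ⟨y, hy, hy0⟩ := intermediate_value_uIcc hcont h0mem
    have hypos : 0 < y := by
      rcases Set.mem_uIcc.mp hy with ⟨h1, _⟩ | ⟨h1, _⟩
      · exact lt_of_lt_of_le hx₀pos h1
      · exact lt_of_lt_of_le hx h1
    have hylt : y < γ₁ := by
      rcases Set.mem_uIcc.mp hy with ⟨_, h2⟩ | ⟨_, h2⟩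
      · exact lt_of_le_of_lt h2 hxlt
      · exact lt_of_le_of_lt h2 hx₀lt
    exact absurd (huniq y hypos hy0) hylt.ne
  -- conclusion
  have hmono : StrictAntiOn C (Set.Icc 1 m₀) := by
    apply strictAntiOn_of_deriv_neg (convex_Icc 1 m₀)
    · intro x hx
      have hx0 : x ≠ 0 := by have := hx.1; positivity
      exact ((hCd x hx0).continuousAt).continuousWithinAt
    · intro x hx
      rw [interior_Icc] at hx
      exact hneg x (by linarith [hx.1]) (by linarith [hx.2])
  refine ⟨hmono, fun γ hγ => ?_⟩
  exact hmono ⟨hγ.1, hγ.2.le⟩ ⟨by linarith [hγ.1, hγ.2], le_refl m₀⟩ hγ.2
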